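/- For all integers $r \geq 1$ and $k \geq 3$, let $G_{r,k}$ be the graph obtained by gluing $r$ cycles of length $k$ at a single common vertex. Then the number of spanning forests satisfies $F(G_{r,k}) = (2^k - 1)^r$, while $\prod_{v \in V(G_{r,k})} d_v = (2r) \cdot 2^{r(k-1)}$; in particular, for each fixed $k$ there exists $r$ such that $F(G_{r,k}) > \prod_{v} d_v$. -/

import Mathlib

/-- The number of spanning forests of `G`: acyclic subsets of the edge set. -/
noncomputable def forestCount {V : Type*} (G : SimpleGraph V) : ℕ :=
  {A : Set (Sym2 V) | A ⊆ G.edgeSet ∧ (SimpleGraph.fromEdgeSet A).IsAcyclic}.ncard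

/-- The graph obtained by gluing `r` cycles of length `k` at a single common
vertex (`none`): the `j`-th cycle is `none, (j,0), (j,1), …, (j,k-2), none`. -/
def glueGraph (r k : ℕ) : SimpleGraph (Option (Fin r × Fin (k - 1))) :=
  SimpleGraph.fromRel fun x y =>
    match x, y with
    | none, some (_, i) => (i : ℕ) = 0 ∨ (i : ℕ) = k - 2
    | some (j, i), some (j', i') => j = j' ∧ (i' : ℕ) = (i : ℕ) + 1
    | _, _ => False

namespace GlueProof
open SimpleGraph

variable {r k : ℕ}

abbrev Vtx (r k : ℕ) := Option (Fin r × Fin (k - 1))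

/-- vertex sequence along petal `j` : `cver 0 = none, cver t = (j, t-1)` for
`1 ≤ t ≤ k-1`, `cver k = none`. -/
def cver (k : ℕ) (j : Fin r) (t : ℕ) : Vtx r k :=
  if h : 1 ≤ t ∧ t ≤ k - 1 then some (j, ⟨t - 1, by omega⟩) else none

/-- the `m`-th edge of petal `j`, `0 ≤ m < k`. -/
def pedge (k : ℕ) (j : Fin r) (m : ℕ) : Sym2 (Vtx r k) :=
  s(cver k j m, cver k j (m + 1))

/-- the edge set of petal `j`. -/
def E (r k : ℕ) (j : Fin r) : Set (Sym2 (Vtx r k)) :=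
  Set.range (fun m : Fin k => pedge k j m)

lemma cver_eq_none_iff (j : Fin r) (t : ℕ) :
    cver k j t = none ↔ ¬(1 ≤ t ∧ t ≤ k - 1) := by
  unfold cver; split_ifs with h <;> simp [h]

lemma cver_eq_none (j : Fin r) {t : ℕ} (h : ¬(1 ≤ t ∧ t ≤ k - 1)) :
    cver k j t = none := by
  unfold cver; rw [dif_neg h]

lemma cver_of_le (j : Fin r) {t : ℕ} (h1 : 1 ≤ t) (h2 : t ≤ k - 1) :
    cver k j t = some (j, ⟨t - 1, by omega⟩) := by
  unfold cver; rw [dif_pos ⟨h1, h2⟩]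

lemma cver_eq_iff {j j' : Fin r} {s t : ℕ} (h : cver k j s = cver k j' t) :
    (¬(1 ≤ s ∧ s ≤ k - 1) ∧ ¬(1 ≤ t ∧ t ≤ k - 1)) ∨
      (j = j' ∧ s = t ∧ 1 ≤ s ∧ s ≤ k - 1) := by
  unfold cver at h
  by_cases h1 : 1 ≤ s ∧ s ≤ k - 1 <;> by_cases h2 : 1 ≤ t ∧ t ≤ k - 1
  · rw [dif_pos h1, dif_pos h2] at h
    simp only [Option.some.injEq, Prod.mk.injEq, Fin.mk.injEq] at h
    right; exact ⟨h.1, by omega, h1⟩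
  · rw [dif_pos h1, dif_neg h2] at h; exact absurd h (by simp)
  · rw [dif_neg h1, dif_pos h2] at h; exact absurd h (by simp)
  · left; exact ⟨h1, h2⟩

lemma adj_iff_aux (x y : Vtx r k) :
    (glueGraph r k).Adj x y ↔ x ≠ y ∧
      ((match x, y with
        | none, some (_, i) => (i : ℕ) = 0 ∨ (i : ℕ) = k - 2
        | some (j, i), some (j', i') => j = j' ∧ (i' : ℕ) = (i : ℕ) + 1
        | _, _ => False) ∨
       (match y, x with
        | none, some (_, i) => (i : ℕ) = 0 ∨ (i : ℕ) = k - 2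
        | some (j, i), some (j', i') => j = j' ∧ (i' : ℕ) = (i : ℕ) + 1
        | _, _ => False)) := by
  exact SimpleGraph.fromRel_adj _ x y


lemma adj_none_some (hk : 3 ≤ k) (j : Fin r) (i : Fin (k - 1)) :
    (glueGraph r k).Adj none (some (j, i)) ↔ ((i : ℕ) = 0 ∨ (i : ℕ) = k - 2) := by
  rw [adj_iff_aux]; simp

lemma adj_some_none (hk : 3 ≤ k) (j : Fin r) (i : Fin (k - 1)) :
    (glueGraph r k).Adj (some (j, i)) none ↔ ((i : ℕ) = 0 ∨ (i : ℕ) = k - 2) := by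
  rw [adj_comm]; exact adj_none_some hk j i

lemma adj_some_some (hk : 3 ≤ k) (j j' : Fin r) (i i' : Fin (k - 1)) :
    (glueGraph r k).Adj (some (j, i)) (some (j', i')) ↔
      j = j' ∧ ((i' : ℕ) = (i : ℕ) + 1 ∨ (i : ℕ) = (i' : ℕ) + 1) := by
  rw [adj_iff_aux]
  constructor
  · rintro ⟨hne, h | h⟩
    · exact ⟨h.1, Or.inl h.2⟩
    · exact ⟨h.1.symm, Or.inr h.2⟩
  · rintro ⟨rfl, h | h⟩
    · exact ⟨by simp [Fin.ext_iff]; omega, Or.inl ⟨rfl, h⟩⟩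
    · exact ⟨by simp [Fin.ext_iff]; omega, Or.inr ⟨rfl, h⟩⟩

lemma not_adj_none_none : ¬ (glueGraph r k).Adj none none := by
  simp


/-- the petal-predecessor of vertex `(j,i)`. -/
def prevV (j : Fin r) (i : Fin (k - 1)) : Vtx r k :=
  if h : (i : ℕ) = 0 then none else some (j, ⟨(i : ℕ) - 1, by omega⟩)

/-- the petal-successor of vertex `(j,i)`. -/
def nextV (j : Fin r) (i : Fin (k - 1)) : Vtx r k :=
  if h : (i : ℕ) = k - 2 then none else some (j, ⟨(i : ℕ) + 1, by have := i.isLt; omega⟩)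

lemma prevV_ne_nextV (hk : 3 ≤ k) (j : Fin r) (i : Fin (k - 1)) :
    prevV j i ≠ nextV j i := by
  have hi := i.isLt
  unfold prevV nextV
  split_ifs with h1 h2 <;> simp [Fin.ext_iff] <;> omega

lemma neighborSet_some (hk : 3 ≤ k) (j : Fin r) (i : Fin (k - 1)) :
    (glueGraph r k).neighborSet (some (j, i)) = {prevV j i, nextV j i} := by
  have hi := i.isLt
  ext x
  simp only [mem_neighborSet, Set.mem_insert_iff, Set.mem_singleton_iff]
  cases x with
  | none =>
    rw [adj_some_none hk]
    unfold prevV nextV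
    constructor
    · rintro (h | h)
      · left; rw [dif_pos h]
      · right; rw [dif_pos h]
    · rintro (h | h) <;> [left; right] <;> by_contra hc <;>
        [rw [dif_neg hc] at h; rw [dif_neg hc] at h] <;> exact (by simp at h)
  | some p =>
    obtain ⟨j', i'⟩ := p
    rw [adj_some_some hk]
    unfold prevV nextV
    constructor
    · rintro ⟨rfl, h | h⟩
      · right
        rw [dif_neg (by omega : ¬ (i : ℕ) = k - 2)]
        simp [Fin.ext_iff]; omega
      · left
        rw [dif_neg (by omega : ¬ (i : ℕ) = 0)]
        simp [Fin.ext_iff]; omega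
    · rintro (h | h)
      · split_ifs at h with h0
        all_goals first
          | (simp only [Option.some.injEq, Prod.mk.injEq] at h
             obtain ⟨rfl, rfl⟩ := h
             exact ⟨rfl, Or.inr (by simp only [Fin.val_mk]; try omega)⟩)
          | simp at h
      · split_ifs at h with h0
        all_goals first
          | (simp only [Option.some.injEq, Prod.mk.injEq] at h
             obtain ⟨rfl, rfl⟩ := h
             exact ⟨rfl, Or.inl (by simp only [Fin.val_mk]; try omega)⟩)
          | simp at h

lemma ncard_neighborSet_some (hk : 3 ≤ k) (j : Fin r) (i : Fin (k - 1)) :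
    ((glueGraph r k).neighborSet (some (j, i))).ncard = 2 := by
  rw [neighborSet_some hk, Set.ncard_pair (prevV_ne_nextV hk j i)]

lemma neighborSet_none (hk : 3 ≤ k) :
    (glueGraph r k).neighborSet (none : Vtx r k) =
      Set.range (fun p : Fin r × Bool =>
        (some (p.1, if p.2 then (⟨0, by omega⟩ : Fin (k - 1)) else ⟨k - 2, by omega⟩) : Vtx r k)) := by
  ext x
  simp only [mem_neighborSet, Set.mem_range]
  cases x with
  | none => simp
  | some p =>
    obtain ⟨j, i⟩ := p
    rw [adj_none_some hk]
    constructor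
    · rintro (h | h)
      · exact ⟨(j, true), by simp [Fin.ext_iff, h.symm]⟩
      · exact ⟨(j, false), by simp [Fin.ext_iff, h.symm]⟩
    · rintro ⟨⟨j', b⟩, hb⟩
      cases b <;> simp only [Option.some.injEq, Prod.mk.injEq, Fin.ext_iff] at hb <;>
        [exact Or.inr hb.2.symm; exact Or.inl hb.2.symm]

lemma ncard_neighborSet_none (hk : 3 ≤ k) :
    ((glueGraph r k).neighborSet (none : Vtx r k)).ncard = 2 * r := by
  rw [neighborSet_none hk, ← Nat.card_coe_set_eq,
    Nat.card_range_of_injective, Nat.card_eq_fintype_card]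
  · simp [Fintype.card_prod, Nat.mul_comm]
  · rintro ⟨j, b⟩ ⟨j', b'⟩ h
    simp only [Option.some.injEq, Prod.mk.injEq] at h
    obtain ⟨rfl, h⟩ := h
    cases b <;> cases b' <;> simp_all [Fin.ext_iff] <;> omega

lemma degree_prod (hk : 3 ≤ k) :
    ∏ v : Vtx r k, ((glueGraph r k).neighborSet v).ncard = 2 * r * 2 ^ (r * (k - 1)) := by
  rw [Fintype.prod_option, ncard_neighborSet_none hk]
  congr 1
  calc ∏ p : Fin r × Fin (k - 1), ((glueGraph r k).neighborSet (some p)).ncard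
      = ∏ p : Fin r × Fin (k - 1), 2 := by
        apply Finset.prod_congr rfl
        rintro ⟨j, i⟩ _
        exact ncard_neighborSet_some hk j i
    _ = 2 ^ (r * (k - 1)) := by
        rw [Finset.prod_const, Finset.card_univ, Fintype.card_prod, Fintype.card_fin,
          Fintype.card_fin]


lemma cver_ne_succ (hk : 3 ≤ k) (j : Fin r) {t : ℕ} (ht : t < k) :
    cver k j t ≠ cver k j (t + 1) := by
  intro h
  rcases cver_eq_iff h with ⟨h1, h2⟩ | ⟨_, h1, _⟩ <;> omega

lemma adj_pedge (hk : 3 ≤ k) (j : Fin r) {m : ℕ} (hm : m < k) :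
    (glueGraph r k).Adj (cver k j m) (cver k j (m + 1)) := by
  rcases Nat.eq_zero_or_pos m with rfl | hm0
  · rw [cver_eq_none j (by omega), cver_of_le j (by omega) (by omega)]
    rw [adj_none_some hk]
    left; rfl
  rcases Nat.lt_or_ge m (k - 1) with hmk | hmk
  · rw [cver_of_le j (by omega) (by omega), cver_of_le j (by omega) (by omega),
      adj_some_some hk]
    exact ⟨rfl, Or.inl (by simp only [Fin.val_mk]; omega)⟩
  · have hm' : m = k - 1 := by omega
    rw [cver_of_le j (by omega) (by omega), cver_eq_none j (by omega),
      adj_some_none hk]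
    right; simp only [Fin.val_mk]; omega

lemma pedge_inj (hk : 3 ≤ k) {j j' : Fin r} {m m' : ℕ} (hm : m < k) (hm' : m' < k)
    (h : pedge k j m = pedge k j' m') : j = j' ∧ m = m' := by
  unfold pedge at h
  rw [Sym2.eq_iff] at h
  rcases h with ⟨h1, h2⟩ | ⟨h1, h2⟩
  · rcases cver_eq_iff h1 with ⟨a1, a2⟩ | ⟨rfl, b1, _⟩
    · -- m = 0 and m' = 0
      have : m = 0 ∧ m' = 0 := by omega
      rcases cver_eq_iff h2 with ⟨c1, c2⟩ | ⟨rfl, _, _⟩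
      · omega
      · exact ⟨rfl, by omega⟩
    · exact ⟨rfl, b1⟩
  · rcases cver_eq_iff h1 with ⟨a1, a2⟩ | ⟨rfl, b1, b2, b3⟩
    · -- m = 0, m' + 1 ≥ k so m' = k - 1
      have hm0 : m = 0 := by omega
      have hm1 : m' = k - 1 := by omega
      rcases cver_eq_iff h2 with ⟨c1, c2⟩ | ⟨rfl, d1, _⟩ <;> omega
    · -- m = m' + 1
      rcases cver_eq_iff h2 with ⟨c1, c2⟩ | ⟨_, d1, _⟩ <;> omega

lemma mem_E_iff {j : Fin r} {e : Sym2 (Vtx r k)} :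
    e ∈ E r k j ↔ ∃ m, m < k ∧ e = pedge k j m := by
  constructor
  · rintro ⟨m, rfl⟩; exact ⟨m, m.isLt, rfl⟩
  · rintro ⟨m, hm, rfl⟩; exact ⟨⟨m, hm⟩, rfl⟩

lemma E_subset_edgeSet (hk : 3 ≤ k) (j : Fin r) : E r k j ⊆ (glueGraph r k).edgeSet := by
  intro e he
  obtain ⟨m, hm, rfl⟩ := mem_E_iff.mp he
  rw [pedge, mem_edgeSet]
  exact adj_pedge hk j hm

lemma edgeSet_eq (hk : 3 ≤ k) : (glueGraph r k).edgeSet = ⋃ j, E r k j := by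
  apply Set.Subset.antisymm
  · intro e
    induction e using Sym2.ind with
    | _ x y =>
      intro he
      rw [mem_edgeSet] at he
      rw [Set.mem_iUnion]
      match x, y with
      | none, none => exact absurd he not_adj_none_none
      | none, some (j, i) =>
        refine ⟨j, ?_⟩
        rw [adj_none_some hk] at he
        rcases he with h | h
        · refine mem_E_iff.mpr ⟨0, by omega, ?_⟩
          rw [pedge, cver_eq_none j (by omega), cver_of_le j (by omega) (by omega)]
          simp only [Sym2.eq_iff, Option.some.injEq, Prod.mk.injEq, Fin.ext_iff, Fin.val_mk,
            reduceCtorEq, true_and, false_and, and_false, and_true, or_false, false_or]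
          omega
        · refine mem_E_iff.mpr ⟨k - 1, by omega, ?_⟩
          rw [pedge, cver_of_le j (by omega) (by omega), cver_eq_none j (by omega)]
          simp only [Sym2.eq_iff, Option.some.injEq, Prod.mk.injEq, Fin.ext_iff, Fin.val_mk,
            reduceCtorEq, true_and, false_and, and_false, and_true, or_false, false_or]
          omega
      | some (j, i), none =>
        refine ⟨j, ?_⟩
        rw [adj_some_none hk] at he
        rcases he with h | h
        · refine mem_E_iff.mpr ⟨0, by omega, ?_⟩
          rw [pedge, cver_eq_none j (by omega), cver_of_le j (by omega) (by omega)]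
          simp only [Sym2.eq_iff, Option.some.injEq, Prod.mk.injEq, Fin.ext_iff, Fin.val_mk,
            reduceCtorEq, true_and, false_and, and_false, and_true, or_false, false_or]
          omega
        · refine mem_E_iff.mpr ⟨k - 1, by omega, ?_⟩
          rw [pedge, cver_of_le j (by omega) (by omega), cver_eq_none j (by omega)]
          simp only [Sym2.eq_iff, Option.some.injEq, Prod.mk.injEq, Fin.ext_iff, Fin.val_mk,
            reduceCtorEq, true_and, false_and, and_false, and_true, or_false, false_or]
          omega
      | some (j, i), some (j', i') =>
        rw [adj_some_some hk] at he
        obtain ⟨rfl, h | h⟩ := he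
        · have hi' := i'.isLt
          refine ⟨j, mem_E_iff.mpr ⟨(i : ℕ) + 1, by omega, ?_⟩⟩
          rw [pedge, cver_of_le j (by omega) (by omega), cver_of_le j (by omega) (by omega)]
          simp only [Sym2.eq_iff, Option.some.injEq, Prod.mk.injEq, Fin.ext_iff, Fin.val_mk,
            true_and]
          omega
        · have hi := i.isLt
          refine ⟨j, mem_E_iff.mpr ⟨(i' : ℕ) + 1, by omega, ?_⟩⟩
          rw [pedge, cver_of_le j (by omega) (by omega), cver_of_le j (by omega) (by omega)]
          simp only [Sym2.eq_iff, Option.some.injEq, Prod.mk.injEq, Fin.ext_iff, Fin.val_mk,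
            true_and]
          omega
  · exact Set.iUnion_subset fun j => E_subset_edgeSet hk j

lemma E_disjoint (hk : 3 ≤ k) {j j' : Fin r} (hjj : j ≠ j') :
    Disjoint (E r k j) (E r k j') := by
  rw [Set.disjoint_left]
  intro e he he'
  obtain ⟨m, hm, rfl⟩ := mem_E_iff.mp he
  obtain ⟨m', hm', heq⟩ := mem_E_iff.mp he'
  exact hjj (pedge_inj hk hm hm' heq).1

lemma ncard_E (hk : 3 ≤ k) (j : Fin r) : (E r k j).ncard = k := by
  rw [E, ← Nat.card_coe_set_eq, Nat.card_range_of_injective, Nat.card_eq_fintype_card,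
    Fintype.card_fin]
  intro m m' h
  exact Fin.ext (pedge_inj hk m.isLt m'.isLt h).2

section Walks

variable {A : Set (Sym2 (Vtx r k))}

/-- the walk `cver t, cver (t+1), …, cver k` in `fromEdgeSet A`, assuming `E j ⊆ A`. -/
def petalWalk (hk : 3 ≤ k) (j : Fin r) (hA : E r k j ⊆ A) (t : ℕ) :
    (SimpleGraph.fromEdgeSet A).Walk (cver k j t) (cver k j k) :=
  if h : t < k then
    SimpleGraph.Walk.cons
      (by
        rw [SimpleGraph.fromEdgeSet_adj]
        exact ⟨hA (mem_E_iff.mpr ⟨t, h, rfl⟩), cver_ne_succ hk j h⟩)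
      (petalWalk hk j hA (t + 1))
  else
    SimpleGraph.Walk.nil.copy
      (by rw [cver_eq_none j (by omega), cver_eq_none j (by omega)]) rfl
termination_by k - t

lemma petalWalk_support (hk : 3 ≤ k) (j : Fin r) (hA : E r k j ⊆ A) (t : ℕ) (ht : t ≤ k) :
    (petalWalk hk j hA t).support = (List.range' t (k - t + 1)).map (cver k j) := by
  rw [petalWalk]
  split_ifs with h
  · rw [SimpleGraph.Walk.support_cons, petalWalk_support hk j hA (t + 1) (by omega)]
    have : k - t + 1 = (k - (t + 1) + 1) + 1 := by omega
    rw [this, List.range'_succ, List.map_cons]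
    exact rfl
  · have : t = k := by omega
    subst this
    simp [SimpleGraph.Walk.support_copy, Nat.sub_self, List.range'_one]
termination_by k - t

lemma petalWalk_edges (hk : 3 ≤ k) (j : Fin r) (hA : E r k j ⊆ A) (t : ℕ) (ht : t ≤ k) :
    (petalWalk hk j hA t).edges = (List.range' t (k - t)).map (pedge k j) := by
  rw [petalWalk]
  split_ifs with h
  · rw [SimpleGraph.Walk.edges_cons, petalWalk_edges hk j hA (t + 1) (by omega)]
    have : k - t = (k - (t + 1)) + 1 := by omega
    rw [this, List.range'_succ, List.map_cons]
    rfl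
  · have : t = k := by omega
    subst this
    simp [SimpleGraph.Walk.edges_copy, Nat.sub_self]
termination_by k - t

/-- the petal cycle as a closed walk at `none`. -/
def petalCycle (hk : 3 ≤ k) (j : Fin r) (hA : E r k j ⊆ A) :
    (SimpleGraph.fromEdgeSet A).Walk none none :=
  (petalWalk hk j hA 0).copy (by rw [cver_eq_none j (by omega)])
    (by rw [cver_eq_none j (by omega)])

lemma petalCycle_isCycle (hk : 3 ≤ k) (j : Fin r) (hA : E r k j ⊆ A) :
    (petalCycle hk j hA).IsCycle := by
  have hedges : (petalCycle hk j hA).edges = (List.range' 0 k).map (pedge k j) := by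
    rw [petalCycle, SimpleGraph.Walk.edges_copy, petalWalk_edges hk j hA 0 (by omega)]
    norm_num
  have hsupp : (petalCycle hk j hA).support = (List.range' 0 (k + 1)).map (cver k j) := by
    rw [petalCycle, SimpleGraph.Walk.support_copy, petalWalk_support hk j hA 0 (by omega)]
    norm_num
  rw [SimpleGraph.Walk.isCycle_def]
  refine ⟨⟨?_⟩, ?_, ?_⟩
  · -- edges nodup
    rw [hedges]
    refine List.Nodup.map_on ?_ List.nodup_range'
    intro x hx y hy hxy
    rw [List.mem_range'] at hx hy
    exact (pedge_inj hk (by omega) (by omega) hxy).2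
  · -- not nil
    intro hnil
    have := congrArg List.length hedges
    rw [hnil] at this
    simp at this
    omega
  · -- support tail nodup
    rw [hsupp]
    have : List.range' 0 (k + 1) = 0 :: List.range' 1 k := by
      rw [List.range'_succ]
    rw [this, List.map_cons, List.tail_cons]
    refine List.Nodup.map_on ?_ List.nodup_range'
    intro x hx y hy hxy
    rw [List.mem_range'] at hx hy
    rcases cver_eq_iff hxy with ⟨h1, h2⟩ | ⟨_, h1, _⟩ <;> omega


/-- In a cycle, every support vertex has two distinct neighbours along cycle edges. -/
lemma two_edges_of_isCycle {W : Type*} [DecidableEq W] {G : SimpleGraph W} {v u : W} {c : G.Walk v v}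
    (hc : c.IsCycle) (hu : u ∈ c.support) :
    ∃ x y, x ≠ y ∧ s(u, x) ∈ c.edges ∧ s(u, y) ∈ c.edges := by
  have hmem : ∀ e : Sym2 W, e ∈ (c.rotate u hu).edges ↔ e ∈ c.edges :=
    fun e => (SimpleGraph.Walk.rotate_edges c u hu).mem_iff
  have hc' := hc.rotate hu
  set c' := c.rotate u hu with hc'def
  clear_value c'
  match c' with
  | SimpleGraph.Walk.nil => exact absurd rfl hc'.ne_nil
  | SimpleGraph.Walk.cons a p =>
    rename_i x
    obtain ⟨y, a₂, q, hq⟩ := SimpleGraph.Walk.exists_eq_cons_of_ne a.ne p.reverse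
    have hy : s(u, y) ∈ p.edges := by
      have : s(u, y) ∈ p.reverse.edges := by rw [hq]; simp
      rwa [SimpleGraph.Walk.edges_reverse, List.mem_reverse] at this
    have hxy : x ≠ y := by
      rintro rfl
      have hnd := hc'.isTrail.edges_nodup
      rw [SimpleGraph.Walk.edges_cons] at hnd
      exact (List.nodup_cons.mp hnd).1 hy
    refine ⟨x, y, hxy, ?_, ?_⟩
    · rw [← hmem _, SimpleGraph.Walk.edges_cons]; exact List.mem_cons_self
    · rw [← hmem _, SimpleGraph.Walk.edges_cons]; exact List.mem_cons.mpr (Or.inr hy)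

section Hard

variable {A : Set (Sym2 (Vtx r k))}

lemma cycle_edges_subset (hA : A ⊆ (glueGraph r k).edgeSet) {v : Vtx r k}
    {c : (SimpleGraph.fromEdgeSet A).Walk v v} : ∀ e ∈ c.edges, e ∈ A := by
  intro e he
  have := SimpleGraph.Walk.edges_subset_edgeSet c he
  rw [SimpleGraph.edgeSet_fromEdgeSet] at this
  exact this.1

/-- key propagation step: a petal vertex on a cycle has both its petal edges on the cycle. -/
lemma petal_edges_mem (hk : 3 ≤ k) (hA : A ⊆ (glueGraph r k).edgeSet) {v : Vtx r k}
    {c : (SimpleGraph.fromEdgeSet A).Walk v v} (hc : c.IsCycle) {j : Fin r} {i : Fin (k - 1)}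
    (hu : some (j, i) ∈ c.support) :
    s(some (j, i), prevV j i) ∈ c.edges ∧ s(some (j, i), nextV j i) ∈ c.edges := by
  obtain ⟨x, y, hxy, hx, hy⟩ := two_edges_of_isCycle hc hu
  have hx' := hA (cycle_edges_subset hA _ hx)
  have hy' := hA (cycle_edges_subset hA _ hy)
  rw [SimpleGraph.mem_edgeSet] at hx' hy'
  have hadjx : x ∈ ({prevV j i, nextV j i} : Set (Vtx r k)) := by
    rw [← neighborSet_some hk]; exact hx'
  have hadjy : y ∈ ({prevV j i, nextV j i} : Set (Vtx r k)) := by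
    rw [← neighborSet_some hk]; exact hy'
  simp only [Set.mem_insert_iff, Set.mem_singleton_iff] at hadjx hadjy
  rcases hadjx with rfl | rfl <;> rcases hadjy with h | h
  · exact absurd h.symm hxy
  · subst h; exact ⟨hx, hy⟩
  · subst h; exact ⟨hy, hx⟩
  · exact absurd h.symm hxy

/-- vertex membership propagates along the petal. -/
lemma petal_mem_support (hk : 3 ≤ k) (hA : A ⊆ (glueGraph r k).edgeSet) {v : Vtx r k}
    {c : (SimpleGraph.fromEdgeSet A).Walk v v} (hc : c.IsCycle) {j : Fin r}
    {i₀ : ℕ} (hi₀ : i₀ < k - 1) (h0 : some (j, (⟨i₀, hi₀⟩ : Fin (k - 1))) ∈ c.support) :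
    ∀ i (hi : i < k - 1), some (j, (⟨i, hi⟩ : Fin (k - 1))) ∈ c.support := by
  -- step down
  have down : ∀ i (hi : i + 1 < k - 1), some (j, (⟨i + 1, hi⟩ : Fin (k - 1))) ∈ c.support →
      some (j, (⟨i, by omega⟩ : Fin (k - 1))) ∈ c.support := by
    intro i hi hmem
    have h := (petal_edges_mem hk hA hc hmem).1
    have hne : ¬ ((⟨i + 1, hi⟩ : Fin (k - 1)) : ℕ) = 0 := by simp
    rw [prevV, dif_neg hne] at h
    have := SimpleGraph.Walk.snd_mem_support_of_mem_edges c h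
    convert this using 4 <;> simp
  -- step up
  have up : ∀ i (hi : i + 1 < k - 1), some (j, (⟨i, by omega⟩ : Fin (k - 1))) ∈ c.support →
      some (j, (⟨i + 1, hi⟩ : Fin (k - 1))) ∈ c.support := by
    intro i hi hmem
    have h := (petal_edges_mem hk hA hc hmem).2
    have hne : ¬ ((⟨i, by omega⟩ : Fin (k - 1)) : ℕ) = k - 2 := by simp; omega
    rw [nextV, dif_neg hne] at h
    have := SimpleGraph.Walk.snd_mem_support_of_mem_edges c h
    convert this using 4
  -- from i₀ down to 0
  have h00 : ∀ i (hi : i < k - 1), some (j, (⟨i, hi⟩ : Fin (k - 1))) ∈ c.support →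
      some (j, (⟨0, by omega⟩ : Fin (k - 1))) ∈ c.support := by
    intro i
    induction i with
    | zero => intro hi h; exact h
    | succ n ih => intro hi h; exact ih (by omega) (down n hi h)
  have hbase := h00 i₀ hi₀ h0
  intro i
  induction i with
  | zero => intro hi; exact hbase
  | succ n ih => intro hi; exact up n hi (ih (by omega))


lemma cycle_gives_petal (hk : 3 ≤ k) (hA : A ⊆ (glueGraph r k).edgeSet) {v : Vtx r k}
    {c : (SimpleGraph.fromEdgeSet A).Walk v v} (hc : c.IsCycle) :
    ∃ j, E r k j ⊆ A := by
  -- find an edge of the cycle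
  have hlen : c.edges ≠ [] := by
    have h3 := hc.three_le_length
    intro h
    have := SimpleGraph.Walk.length_edges c
    rw [h] at this
    simp at this
    omega
  obtain ⟨e, he⟩ := List.exists_mem_of_ne_nil _ hlen
  have heA : e ∈ A := cycle_edges_subset hA _ he
  have heE : e ∈ ⋃ j, E r k j := by rw [← edgeSet_eq hk]; exact hA heA
  rw [Set.mem_iUnion] at heE
  obtain ⟨j, hj⟩ := heE
  obtain ⟨m, hm, rfl⟩ := mem_E_iff.mp hj
  refine ⟨j, ?_⟩
  -- find a petal-j vertex on the cycle
  have hsupp : ∃ i₀, ∃ hi₀ : i₀ < k - 1, some (j, (⟨i₀, hi₀⟩ : Fin (k - 1))) ∈ c.support := by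
    rcases Nat.eq_zero_or_pos m with rfl | hm0
    · refine ⟨0, by omega, ?_⟩
      have h1 : cver k j (0 + 1) = some (j, ⟨0, by omega⟩) := by
        rw [cver_of_le j (by omega) (by omega)]
      have := SimpleGraph.Walk.snd_mem_support_of_mem_edges c (by rw [pedge] at he; exact he)
      rwa [h1] at this
    · refine ⟨m - 1, by omega, ?_⟩
      have h1 : cver k j m = some (j, ⟨m - 1, by omega⟩) := by
        rw [cver_of_le j (by omega) (by omega)]
      have := SimpleGraph.Walk.fst_mem_support_of_mem_edges c (by rw [pedge] at he; exact he)
      rwa [h1] at this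
  obtain ⟨i₀, hi₀, hmem⟩ := hsupp
  have hall := petal_mem_support hk hA hc hi₀ hmem
  -- every petal edge is on the cycle
  intro e' he'
  obtain ⟨m', hm', rfl⟩ := mem_E_iff.mp he'
  apply cycle_edges_subset hA
  rcases Nat.eq_zero_or_pos m' with rfl | hm'0
  · have h := (petal_edges_mem hk hA hc (hall 0 (by omega))).1
    have hp : prevV j (⟨0, by omega⟩ : Fin (k - 1)) = none := by
      rw [prevV, dif_pos rfl]
    rw [hp] at h
    have heq : pedge k j 0 = s(some (j, (⟨0, by omega⟩ : Fin (k - 1))), none) := by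
      rw [pedge, cver_eq_none j (by omega), cver_of_le j (by omega) (by omega), Sym2.eq_swap]
    rwa [heq]
  rcases Nat.lt_or_ge m' (k - 1) with hmk | hmk
  · -- 1 ≤ m' ≤ k - 2 : edge from v_{m'-1} to v_{m'}
    have h := (petal_edges_mem hk hA hc (hall (m' - 1) (by omega))).2
    have hn : nextV j (⟨m' - 1, by omega⟩ : Fin (k - 1)) =
        some (j, ⟨m', by omega⟩) := by
      rw [nextV, dif_neg (by simp only [Fin.val_mk]; omega)]
      congr 1
      exact Prod.ext rfl (Fin.ext (by simp only [Fin.val_mk]; omega))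
    rw [hn] at h
    have heq : pedge k j m' =
        s(some (j, (⟨m' - 1, by omega⟩ : Fin (k - 1))), some (j, (⟨m', by omega⟩ : Fin (k - 1)))) := by
      rw [pedge, cver_of_le j (by omega) (by omega), cver_of_le j (by omega) (by omega)]
      simp only [Sym2.eq_iff, Option.some.injEq, Prod.mk.injEq, Fin.ext_iff, Fin.val_mk,
        reduceCtorEq, and_true, true_and, and_false, false_and, or_false, false_or]
      try omega
    rwa [heq]
  · -- m' = k - 1 : edge from v_{k-2} to none
    have hm'' : m' = k - 1 := by omega
    have h := (petal_edges_mem hk hA hc (hall (k - 2) (by omega))).2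
    have hn : nextV j (⟨k - 2, by omega⟩ : Fin (k - 1)) = none := by
      rw [nextV, dif_pos rfl]
    rw [hn] at h
    have heq : pedge k j m' = s(some (j, (⟨k - 2, by omega⟩ : Fin (k - 1))), none) := by
      rw [pedge, cver_of_le j (by omega) (by omega), cver_eq_none j (by omega)]
      simp only [Sym2.eq_iff, Option.some.injEq, Prod.mk.injEq, Fin.ext_iff, Fin.val_mk,
        reduceCtorEq, and_true, true_and, and_false, false_and, or_false, false_or]
      try omega
    rwa [heq]

lemma acyclic_iff (hk : 3 ≤ k) (hA : A ⊆ (glueGraph r k).edgeSet) :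
    (SimpleGraph.fromEdgeSet A).IsAcyclic ↔ ∀ j, ¬ E r k j ⊆ A := by
  constructor
  · intro hac j hj
    exact hac (petalCycle hk j hj) (petalCycle_isCycle hk j hj)
  · intro h
    by_contra hac
    rw [SimpleGraph.IsAcyclic] at hac
    push_neg at hac
    obtain ⟨v, c, hc⟩ := hac
    obtain ⟨j, hj⟩ := cycle_gives_petal hk hA hc
    exact h j hj

end Hard

end Walks


section Count

lemma card_proper_subsets {α : Type*} [Fintype α] (S : Set α) :
    Nat.card {B : Set α // B ⊆ S ∧ B ≠ S} = 2 ^ S.ncard - 1 := by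
  classical
  let e : {B : Set α // B ⊆ S ∧ B ≠ S} ≃ {C : Set ↥S // C ≠ Set.univ} :=
    { toFun := fun B => ⟨Subtype.val ⁻¹' B.1, by
        intro h
        apply B.2.2
        apply Set.Subset.antisymm B.2.1
        intro a ha
        have : (⟨a, ha⟩ : ↥S) ∈ Subtype.val ⁻¹' B.1 := by rw [h]; trivial
        exact this⟩
      invFun := fun C => ⟨Subtype.val '' C.1, by
        constructor
        · rintro x ⟨c, _, rfl⟩; exact c.2
        · intro h
          apply C.2
          rw [Set.eq_univ_iff_forall]
          intro x
          have hx : (x : α) ∈ Subtype.val '' C.1 := by rw [h]; exact x.2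
          obtain ⟨c, hc, hcx⟩ := hx
          have : c = x := Subtype.ext hcx
          rwa [← this]⟩
      left_inv := fun B => by
        apply Subtype.ext
        show Subtype.val '' (Subtype.val ⁻¹' B.1) = B.1
        rw [Subtype.image_preimage_coe]
        exact Set.inter_eq_self_of_subset_right B.2.1
      right_inv := fun C => by
        apply Subtype.ext
        show Subtype.val ⁻¹' (Subtype.val '' C.1) = C.1
        exact Set.preimage_image_eq _ Subtype.val_injective }
  rw [Nat.card_congr e, Nat.card_eq_fintype_card]
  have h1 : Fintype.card {C : Set ↥S // ¬ (C = Set.univ)} =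
      Fintype.card (Set ↥S) - Fintype.card {C : Set ↥S // C = Set.univ} :=
    Fintype.card_subtype_compl _
  rw [h1, Fintype.card_subtype_eq, Fintype.card_set]
  congr 2
  rw [← Nat.card_coe_set_eq, Nat.card_eq_fintype_card]

variable {A : Set (Sym2 (Vtx r k))}

lemma forestCount_eq (hk : 3 ≤ k) :
    forestCount (glueGraph r k) = (2 ^ k - 1) ^ r := by
  classical
  have hsub : ∀ (B : (j : Fin r) → {B : Set (Sym2 (Vtx r k)) // B ⊆ E r k j ∧ B ≠ E r k j}),
      (⋃ j, (B j).1) ⊆ (glueGraph r k).edgeSet := by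
    intro B e he
    rw [Set.mem_iUnion] at he
    obtain ⟨j, hj⟩ := he
    exact E_subset_edgeSet hk j ((B j).2.1 hj)
  have hacy : ∀ (B : (j : Fin r) → {B : Set (Sym2 (Vtx r k)) // B ⊆ E r k j ∧ B ≠ E r k j}),
      (SimpleGraph.fromEdgeSet (⋃ j, (B j).1)).IsAcyclic := by
    intro B
    rw [acyclic_iff hk (hsub B)]
    intro j hj
    apply (B j).2.2
    apply Set.Subset.antisymm (B j).2.1
    intro e he
    have he' := hj he
    rw [Set.mem_iUnion] at he'
    obtain ⟨i, hi⟩ := he'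
    rcases eq_or_ne i j with rfl | hij
    · exact hi
    · exact ((Set.disjoint_left.mp (E_disjoint hk hij) ((B i).2.1 hi)) he).elim
  let eqv : {A : Set (Sym2 (Vtx r k)) //
        A ⊆ (glueGraph r k).edgeSet ∧ (SimpleGraph.fromEdgeSet A).IsAcyclic}
      ≃ ((j : Fin r) → {B : Set (Sym2 (Vtx r k)) // B ⊆ E r k j ∧ B ≠ E r k j}) :=
    { toFun := fun A j => ⟨A.1 ∩ E r k j, Set.inter_subset_right, by
        have hnot := (acyclic_iff hk A.2.1).mp A.2.2 j
        intro h
        apply hnot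
        intro e he'
        rw [← h] at he'
        exact he'.1⟩
      invFun := fun B => ⟨⋃ j, (B j).1, hsub B, hacy B⟩
      left_inv := fun A => by
        apply Subtype.ext
        show ⋃ j, (A.1 ∩ E r k j) = A.1
        rw [← Set.inter_iUnion]
        apply Set.inter_eq_self_of_subset_left
        rw [← edgeSet_eq hk]
        exact A.2.1
      right_inv := fun B => by
        funext j
        apply Subtype.ext
        show (⋃ i, (B i).1) ∩ E r k j = (B j).1
        apply Set.Subset.antisymm
        · rintro e ⟨he1, he2⟩
          rw [Set.mem_iUnion] at he1
          obtain ⟨i, hi⟩ := he1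
          rcases eq_or_ne i j with rfl | hij
          · exact hi
          · exact absurd he2 (Set.disjoint_left.mp (E_disjoint hk hij) ((B i).2.1 hi))
        · intro e he
          exact ⟨Set.mem_iUnion.mpr ⟨j, he⟩, (B j).2.1 he⟩ }
  rw [forestCount, ← Nat.card_coe_set_eq]
  show Nat.card {A : Set (Sym2 (Vtx r k)) //
      A ⊆ (glueGraph r k).edgeSet ∧ (SimpleGraph.fromEdgeSet A).IsAcyclic} = (2 ^ k - 1) ^ r
  rw [Nat.card_congr eqv, Nat.card_pi]
  have : ∀ j : Fin r, Nat.card {B : Set (Sym2 (Vtx r k)) // B ⊆ E r k j ∧ B ≠ E r k j}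
      = 2 ^ k - 1 := by
    intro j
    rw [card_proper_subsets, ncard_E hk]
  rw [Finset.prod_congr rfl fun j _ => this j, Finset.prod_const, Finset.card_univ,
    Fintype.card_fin]

end Count

end GlueProof

theorem glueGraph_forests :
    (∀ r k : ℕ, 1 ≤ r → 3 ≤ k →
      forestCount (glueGraph r k) = (2 ^ k - 1) ^ r ∧
        ∏ v : Option (Fin r × Fin (k - 1)), ((glueGraph r k).neighborSet v).ncard
          = 2 * r * 2 ^ (r * (k - 1))) ∧
    ∀ k : ℕ, 3 ≤ k → ∃ r : ℕ, 1 ≤ r ∧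
      forestCount (glueGraph r k)
        > ∏ v : Option (Fin r × Fin (k - 1)), ((glueGraph r k).neighborSet v).ncard := by
  constructor
  · intro r k _ hk
    exact ⟨GlueProof.forestCount_eq hk, GlueProof.degree_prod hk⟩
  · intro k hk
    refine ⟨6, by norm_num, ?_⟩
    rw [GlueProof.forestCount_eq hk, GlueProof.degree_prod hk]
    show 2 * 6 * 2 ^ (6 * (k - 1)) < (2 ^ k - 1) ^ 6
    have h1 : (8 : ℕ) ≤ 2 ^ k := by
      calc (8 : ℕ) = 2 ^ 3 := by norm_num
      _ ≤ 2 ^ k := Nat.pow_le_pow_right (by norm_num) hk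
    have h2 : 7 * 2 ^ k ≤ 8 * (2 ^ k - 1) := by omega
    have h3 : (7 * 2 ^ k) ^ 6 ≤ (8 * (2 ^ k - 1)) ^ 6 := Nat.pow_le_pow_left h2 6
    rw [mul_pow, mul_pow] at h3
    have h4 : (2 ^ k) ^ 6 = 64 * 2 ^ (6 * (k - 1)) := by
      rw [← pow_mul, show k * 6 = 6 * (k - 1) + 6 by omega, pow_add]
      ring
    rw [h4] at h3
    have h6 : 8 ^ 6 * (2 * 6 * 2 ^ (6 * (k - 1))) < 7 ^ 6 * (64 * 2 ^ (6 * (k - 1))) := by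
      have hlt : (8:ℕ) ^ 6 * (2 * 6) < 7 ^ 6 * 64 := by norm_num
      calc 8 ^ 6 * (2 * 6 * 2 ^ (6 * (k - 1))) = (8 ^ 6 * (2 * 6)) * 2 ^ (6 * (k - 1)) := by ring
      _ < (7 ^ 6 * 64) * 2 ^ (6 * (k - 1)) :=
          Nat.mul_lt_mul_of_lt_of_le hlt (le_refl _) (Nat.pow_pos (by norm_num))
      _ = 7 ^ 6 * (64 * 2 ^ (6 * (k - 1))) := by ring
    exact Nat.lt_of_mul_lt_mul_left (lt_of_lt_of_le h6 h3)
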